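/- arXiv:1602.01164 — 4 statements merged into one kernel-verified Lean document; each statement's English description precedes it below -/
import Mathlib

section
/- Let l_1,...,l_N : Θ → ℝ be differentiable with θ ∈ Θ, Δ = max_i l_i(θ), S = {i : l_i(θ) = Δ}. Then the normalized hypervolume gradient −∑_i α_i(μ)∇l_i(θ) converges to −(1/|S|)∑_{i∈S} ∇l_i(θ) as μ → Δ⁺, where α_i(μ) = (1/(μ − l_i(θ)))/∑_j (1/(μ − l_j(θ))). -/
open Filter

theorem normalized_hypervolume_gradient_tendsto_max_loss_gradient
    (n N : ℕ) (hN : 0 < N)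
    (Θ : Set (EuclideanSpace ℝ (Fin n))) (hΘ : IsOpen Θ)
    (l : Fin N → EuclideanSpace ℝ (Fin n) → ℝ)
    (hl : ∀ i, DifferentiableOn ℝ (l i) Θ)
    (θ : EuclideanSpace ℝ (Fin n)) (hθ : θ ∈ Θ)
    (Δ : ℝ) (hΔ : IsGreatest (Set.range fun i => l i θ) Δ)
    (S : Finset (Fin N)) (hS : S = Finset.univ.filter fun i => l i θ = Δ) :
    Tendsto
      (fun μ : ℝ =>
        -∑ i : Fin N,
          ((μ - l i θ)⁻¹ / ∑ j : Fin N, (μ - l j θ)⁻¹) • gradient (l i) θ)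
      (nhdsWithin Δ (Set.Ioi Δ))
      (nhds (-((1 / (S.card : ℝ)) • ∑ i ∈ S, gradient (l i) θ))) := by
  obtain ⟨hmem, hub⟩ := hΔ
  obtain ⟨i₀, hi₀⟩ := hmem
  have hub' : ∀ i, l i θ ≤ Δ := fun i => hub ⟨i, rfl⟩
  have hScard : (0:ℝ) < S.card := by
    have hi₀S : i₀ ∈ S := by simp [hS, hi₀]
    exact_mod_cast Finset.card_pos.mpr ⟨i₀, hi₀S⟩
  set g : Fin N → EuclideanSpace ℝ (Fin n) := fun i => gradient (l i) θ with hg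
  set f : Fin N → ℝ → ℝ := fun i μ => (μ - Δ) / (μ - l i θ) with hfdef
  have hf : ∀ i, Tendsto (f i) (nhdsWithin Δ (Set.Ioi Δ))
      (nhds (if i ∈ S then 1 else 0)) := by
    intro i
    by_cases hi : i ∈ S
    · simp only [hi, if_true]
      apply Tendsto.congr' _ tendsto_const_nhds
      filter_upwards [self_mem_nhdsWithin] with μ (hμ : Δ < μ)
      have hne : μ - Δ ≠ 0 := sub_ne_zero.mpr (ne_of_gt hμ)
      have hliθ : l i θ = Δ := by simpa [hS] using hi
      simp [hfdef, hliθ, div_self hne]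
    · simp only [hi, if_false]
      have hne : l i θ ≠ Δ := by simpa [hS] using hi
      have hlt : l i θ < Δ := lt_of_le_of_ne (hub' i) hne
      have hden : Δ - l i θ ≠ 0 := ne_of_gt (sub_pos.mpr hlt)
      have h1 : Tendsto (fun μ : ℝ => μ - Δ) (nhdsWithin Δ (Set.Ioi Δ)) (nhds 0) := by
        have h : Tendsto (fun μ : ℝ => μ - Δ) (nhds Δ) (nhds (Δ - Δ)) :=
          (continuous_id.sub continuous_const).tendsto Δ
        simpa using h.mono_left nhdsWithin_le_nhds
      have h2 : Tendsto (fun μ : ℝ => μ - l i θ) (nhdsWithin Δ (Set.Ioi Δ))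
          (nhds (Δ - l i θ)) := by
        have h : Tendsto (fun μ : ℝ => μ - l i θ) (nhds Δ) (nhds (Δ - l i θ)) :=
          (continuous_id.sub continuous_const).tendsto Δ
        exact h.mono_left nhdsWithin_le_nhds
      have h3 := h1.div h2 hden
      rw [zero_div] at h3
      exact h3
  have hsum : Tendsto (fun μ => ∑ j, f j μ) (nhdsWithin Δ (Set.Ioi Δ))
      (nhds (S.card : ℝ)) := by
    have h := tendsto_finset_sum Finset.univ (fun j (_ : j ∈ Finset.univ) => hf j)
    have hcard : (∑ j : Fin N, if j ∈ S then (1:ℝ) else 0) = (S.card : ℝ) := by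
      rw [Finset.sum_ite_mem]
      simp [Finset.univ_inter]
    rwa [hcard] at h
  have hα : ∀ i, Tendsto (fun μ => f i μ / ∑ j, f j μ) (nhdsWithin Δ (Set.Ioi Δ))
      (nhds ((if i ∈ S then (1:ℝ) else 0) / S.card)) :=
    fun i => (hf i).div hsum (ne_of_gt hScard)
  have hmain : Tendsto
      (fun μ : ℝ => -∑ i : Fin N, (f i μ / ∑ j, f j μ) • g i)
      (nhdsWithin Δ (Set.Ioi Δ))
      (nhds (-∑ i : Fin N, ((if i ∈ S then (1:ℝ) else 0) / S.card) • g i)) :=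
    (tendsto_finset_sum Finset.univ
      (fun i _ => ((hα i).smul_const (g i)))).neg
  have hlim_eq : (-∑ i : Fin N, ((if i ∈ S then (1:ℝ) else 0) / S.card) • g i)
      = -((1 / (S.card : ℝ)) • ∑ i ∈ S, g i) := by
    rw [Finset.smul_sum]
    congr 1
    simp only [ite_div, zero_div, ite_smul, zero_smul]
    rw [Finset.sum_ite_mem, Finset.univ_inter]
  refine Tendsto.congr' ?_ (hlim_eq ▸ hmain)
  filter_upwards [self_mem_nhdsWithin] with μ (hμ : Δ < μ)
  have hμΔ : μ - Δ ≠ 0 := sub_ne_zero.mpr (ne_of_gt hμ)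
  congr 1
  apply Finset.sum_congr rfl
  intro i _
  congr 1
  have hnum : ∀ j, f j μ = (μ - Δ) * (μ - l j θ)⁻¹ := fun j => div_eq_mul_inv _ _
  simp only [hnum]
  rw [← Finset.mul_sum, mul_div_mul_left _ _ hμΔ]
end

section
/- (Lemma: weight concentration bound, mean-to-hypervolume direction.) Let l_1,...,l_N be loss functions on open Θ ⊆ ℝⁿ, θ ∈ Θ, ε > 0 with θ+δ ∈ Θ for ‖δ‖ ≤ ε, ν > 0, and C_1 ≤ l_i(θ+δ) ≤ C_2 for all i and ‖δ‖ ≤ ε. Define β_i(δ) = 1/(μ − l_i(θ+δ)) and α_i(δ) = β_i(δ)/∑_j β_j(δ). If μ > max{C_2, ((1+ν)C_2 − C_1)/ν, (C_2 − (1−ν)C_1)/ν}, then |N α_i(δ) − 1| ≤ ν for all i ∈ [N] and ‖δ‖ ≤ ε. -/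
theorem weight_concentration_mean_to_hypervolume
    (n N : ℕ)
    (Θ : Set (EuclideanSpace ℝ (Fin n))) (hΘ : IsOpen Θ)
    (l : Fin N → EuclideanSpace ℝ (Fin n) → ℝ)
    (θ : EuclideanSpace ℝ (Fin n)) (hθ : θ ∈ Θ)
    (ε : ℝ) (hε : 0 < ε)
    (hball : ∀ δ : EuclideanSpace ℝ (Fin n), ‖δ‖ ≤ ε → θ + δ ∈ Θ)
    (ν : ℝ) (hν : 0 < ν)
    (C₁ C₂ : ℝ)
    (hbound : ∀ i, ∀ δ : EuclideanSpace ℝ (Fin n), ‖δ‖ ≤ ε →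
      C₁ ≤ l i (θ + δ) ∧ l i (θ + δ) ≤ C₂)
    (μ : ℝ)
    (hμ : μ > max (max C₂ (((1 + ν) * C₂ - C₁) / ν)) ((C₂ - (1 - ν) * C₁) / ν)) :
    ∀ i, ∀ δ : EuclideanSpace ℝ (Fin n), ‖δ‖ ≤ ε →
      |(N : ℝ) * ((μ - l i (θ + δ))⁻¹ / ∑ j : Fin N, (μ - l j (θ + δ))⁻¹) - 1|
        ≤ ν := by
  intro i δ hδ
  have h0 : ‖(0 : EuclideanSpace ℝ (Fin n))‖ ≤ ε := by simp [hε.le]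
  have hC : C₁ ≤ C₂ := le_trans (hbound i 0 h0).1 (hbound i 0 h0).2
  have hC2 : C₂ < μ := lt_of_le_of_lt (le_trans (le_max_left _ _) (le_max_left _ _)) hμ
  have hX : ((1 + ν) * C₂ - C₁) / ν < μ :=
    lt_of_le_of_lt (le_trans (le_max_right _ _) (le_max_left _ _)) hμ
  have hY : (C₂ - (1 - ν) * C₁) / ν < μ := lt_of_le_of_lt (le_max_right _ _) hμ
  have hX' : (1 + ν) * C₂ - C₁ < ν * μ := by
    rw [div_lt_iff₀ hν] at hX; linarith
  have hY' : C₂ - (1 - ν) * C₁ < ν * μ := by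
    rw [div_lt_iff₀ hν] at hY; linarith
  set a : Fin N → ℝ := fun j => μ - l j (θ + δ) with ha
  have hd2 : (0 : ℝ) < μ - C₂ := by linarith
  have hd1 : (0 : ℝ) < μ - C₁ := by linarith
  have hlo : ∀ j, μ - C₂ ≤ a j := fun j => by
    have := (hbound j δ hδ).2; simp only [ha]; linarith
  have hhi : ∀ j, a j ≤ μ - C₁ := fun j => by
    have := (hbound j δ hδ).1; simp only [ha]; linarith
  have hapos : ∀ j, 0 < a j := fun j => lt_of_lt_of_le hd2 (hlo j)
  set S : ℝ := ∑ j : Fin N, (a j)⁻¹ with hS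
  have hinv_lo : ∀ j, (μ - C₁)⁻¹ ≤ (a j)⁻¹ := fun j =>
    inv_anti₀ (hapos j) (hhi j)
  have hinv_hi : ∀ j, (a j)⁻¹ ≤ (μ - C₂)⁻¹ := fun j =>
    inv_anti₀ hd2 (hlo j)
  have hS_lo : (N : ℝ) * (μ - C₁)⁻¹ ≤ S := by
    calc (N : ℝ) * (μ - C₁)⁻¹ = ∑ _j : Fin N, (μ - C₁)⁻¹ := by
          simp [Finset.sum_const, mul_comm]
      _ ≤ S := Finset.sum_le_sum fun j _ => hinv_lo j
  have hS_hi : S ≤ (N : ℝ) * (μ - C₂)⁻¹ := by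
    calc S ≤ ∑ _j : Fin N, (μ - C₂)⁻¹ := Finset.sum_le_sum fun j _ => hinv_hi j
      _ = (N : ℝ) * (μ - C₂)⁻¹ := by simp [Finset.sum_const, mul_comm]
  have hN1 : (1 : ℝ) ≤ (N : ℝ) := by exact_mod_cast i.pos
  have hSpos : 0 < S :=
    lt_of_lt_of_le (by nlinarith [inv_pos.mpr hd1]) hS_lo
  -- key middle inequalities
  have hkm1 : (μ - C₂)⁻¹ ≤ (1 + ν) * (μ - C₁)⁻¹ := by
    rw [show (1 + ν) * (μ - C₁)⁻¹ = (1 + ν) / (μ - C₁) from (div_eq_mul_inv _ _).symm,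
      inv_eq_one_div, div_le_div_iff₀ hd2 hd1]
    nlinarith
  have key2 : (N : ℝ) * (a i)⁻¹ ≤ (1 + ν) * S := by
    calc (N : ℝ) * (a i)⁻¹ ≤ (N : ℝ) * (μ - C₂)⁻¹ :=
          mul_le_mul_of_nonneg_left (hinv_hi i) (by positivity)
      _ ≤ (1 + ν) * ((N : ℝ) * (μ - C₁)⁻¹) := by nlinarith [hkm1, hN1]
      _ ≤ (1 + ν) * S := mul_le_mul_of_nonneg_left hS_lo (by linarith)
  have key1 : (1 - ν) * S ≤ (N : ℝ) * (a i)⁻¹ := by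
    rcases le_or_gt 1 ν with hν1 | hν1
    · have : (1 - ν) * S ≤ 0 := mul_nonpos_of_nonpos_of_nonneg (by linarith) hSpos.le
      have hpos : 0 < (N : ℝ) * (a i)⁻¹ := by
        have := hapos i; positivity
      linarith
    · have hkm2 : (1 - ν) * (μ - C₂)⁻¹ ≤ (μ - C₁)⁻¹ := by
        rw [show (1 - ν) * (μ - C₂)⁻¹ = (1 - ν) / (μ - C₂) from (div_eq_mul_inv _ _).symm,
          inv_eq_one_div, div_le_div_iff₀ hd2 hd1]
        nlinarith
      calc (1 - ν) * S ≤ (1 - ν) * ((N : ℝ) * (μ - C₂)⁻¹) :=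
            mul_le_mul_of_nonneg_left hS_hi (by linarith)
        _ ≤ (N : ℝ) * (μ - C₁)⁻¹ := by nlinarith [hkm2, hN1]
        _ ≤ (N : ℝ) * (a i)⁻¹ :=
            mul_le_mul_of_nonneg_left (hinv_lo i) (by positivity)
  rw [abs_le]
  constructor
  · rw [neg_le, neg_sub]
    have h : (1 - ν) ≤ (N : ℝ) * (a i)⁻¹ / S := by
      rw [le_div_iff₀ hSpos]; linarith [key1]
    rw [mul_div_assoc] at h
    show 1 - (N : ℝ) * ((a i)⁻¹ / S) ≤ ν
    linarith
  · have h : (N : ℝ) * (a i)⁻¹ / S ≤ 1 + ν := by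
      rw [div_le_iff₀ hSpos]; linarith [key2]
    rw [mul_div_assoc] at h
    show (N : ℝ) * ((a i)⁻¹ / S) - 1 ≤ ν
    linarith
end

section
/- (Theorem 1: near-optimality of mean-loss minimizers for the hypervolume.) Let l_1,...,l_N be continuously differentiable loss functions on open Θ ⊆ ℝⁿ, θ* a local minimum of J_m(θ) = (1/N)∑_i l_i(θ), and ε > 0 with θ*+δ ∈ Θ for ‖δ‖ ≤ ε. Let C_1 ≤ l_i(θ*+δ) ≤ C_2 and ‖∇l_i(θ*+δ)‖ ≤ C_3 for all i and ‖δ‖ ≤ ε, and let ν > 0. Then there exists ε' ∈ (0, ε] such that H(μ, θ*+δ) ≤ H(μ, θ*) + νC_3ε'N/(μ − C_2) for all ‖δ‖ ≤ ε' and all μ > max{C_2, ((1+ν)C_2 − C_1)/ν, (C_2 − (1−ν)C_1)/ν}. -/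
theorem mean_loss_minimizer_near_optimal_for_hypervolume
    (n N : ℕ)
    (Θ : Set (EuclideanSpace ℝ (Fin n))) (hΘ : IsOpen Θ)
    (l : Fin N → EuclideanSpace ℝ (Fin n) → ℝ)
    (hl : ∀ i, ContDiffOn ℝ 1 (l i) Θ)
    (θs : EuclideanSpace ℝ (Fin n)) (hθs : θs ∈ Θ)
    (hmin : IsLocalMin (fun θ => (1 / (N : ℝ)) * ∑ i : Fin N, l i θ) θs)
    (ε : ℝ) (hε : 0 < ε)
    (hball : ∀ δ : EuclideanSpace ℝ (Fin n), ‖δ‖ ≤ ε → θs + δ ∈ Θ)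
    (C₁ C₂ C₃ : ℝ)
    (hbound : ∀ i, ∀ δ : EuclideanSpace ℝ (Fin n), ‖δ‖ ≤ ε →
      C₁ ≤ l i (θs + δ) ∧ l i (θs + δ) ≤ C₂)
    (hgrad : ∀ i, ∀ δ : EuclideanSpace ℝ (Fin n), ‖δ‖ ≤ ε →
      ‖gradient (l i) (θs + δ)‖ ≤ C₃)
    (ν : ℝ) (hν : 0 < ν) :
    ∃ ε' ∈ Set.Ioc (0 : ℝ) ε,
      ∀ δ : EuclideanSpace ℝ (Fin n), ‖δ‖ ≤ ε' →
      ∀ μ : ℝ,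
        μ > max (max C₂ (((1 + ν) * C₂ - C₁) / ν)) ((C₂ - (1 - ν) * C₁) / ν) →
        ∑ i : Fin N, Real.log (μ - l i (θs + δ))
          ≤ (∑ i : Fin N, Real.log (μ - l i θs))
            + ν * C₃ * ε' * N / (μ - C₂) := by
  rcases Nat.eq_zero_or_pos N with hN | hN
  · refine ⟨ε, ⟨hε, le_rfl⟩, fun δ hδ μ hμ => ?_⟩
    subst hN
    simp
  -- N > 0
  obtain ⟨r, hr, hrmin⟩ := Metric.eventually_nhds_iff_ball.mp hmin
  set ε' : ℝ := min (ε / 2) (r / 2) with hε'def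
  have hε'pos : 0 < ε' := lt_min (by linarith) (by linarith)
  have hε'lt : ε' < ε := lt_of_le_of_lt (min_le_left _ _) (by linarith)
  have hε'ltr : ε' < r := lt_of_le_of_lt (min_le_right _ _) (by linarith)
  refine ⟨ε', ⟨hε'pos, hε'lt.le⟩, fun δ hδ μ hμ => ?_⟩
  -- basic facts
  have hδε : ‖δ‖ ≤ ε := le_trans hδ hε'lt.le
  have hμC₂ : C₂ < μ := lt_of_le_of_lt (le_max_left _ _) (lt_of_le_of_lt (le_max_left _ _) hμ)
  have hD : (0:ℝ) < μ - C₂ := by linarith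
  have hνD : C₂ - C₁ < ν * (μ - C₂) := by
    have h1 : ((1 + ν) * C₂ - C₁) / ν < μ :=
      lt_of_le_of_lt (le_max_right _ _) (lt_of_le_of_lt (le_max_left _ _) hμ)
    rw [div_lt_iff₀ hν] at h1
    nlinarith
  have hC₃ : 0 ≤ C₃ := le_trans (norm_nonneg _) (hgrad ⟨0, hN⟩ 0 (by simpa using hε.le))
  have hC₁₂ : C₁ ≤ C₂ := by
    have h := hbound ⟨0, hN⟩ 0 (by simpa using hε.le)
    simpa using le_trans h.1 h.2
  have hb : ∀ i, C₁ ≤ l i θs ∧ l i θs ≤ C₂ := by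
    intro i; simpa using hbound i 0 (by simpa using hε.le)
  have ha : ∀ i, C₁ ≤ l i (θs + δ) ∧ l i (θs + δ) ≤ C₂ := fun i => hbound i δ hδε
  -- local min gives sum inequality
  have hsum : ∑ i : Fin N, l i θs ≤ ∑ i : Fin N, l i (θs + δ) := by
    have hmem : θs + δ ∈ Metric.ball θs r := by
      simp only [Metric.mem_ball, dist_eq_norm, add_sub_cancel_left]
      exact lt_of_le_of_lt hδ hε'ltr
    have h := hrmin (θs + δ) hmem
    have hNpos : (0:ℝ) < 1 / (N:ℝ) := by positivity
    simpa using (mul_le_mul_iff_right₀ hNpos).mp h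
  -- Lipschitz bound from gradient
  have hlip : ∀ i : Fin N, |l i (θs + δ) - l i θs| ≤ C₃ * ε' := by
    intro i
    have hsub : Metric.ball θs ε ⊆ Θ := by
      intro x hx
      have : x = θs + (x - θs) := by abel
      rw [this]
      exact hball _ (le_of_lt (by simpa [dist_eq_norm] using hx))
    have hdiff : ∀ x ∈ Metric.ball θs ε, DifferentiableAt ℝ (l i) x := fun x hx =>
      ((hl i).differentiableOn one_ne_zero).differentiableAt (hΘ.mem_nhds (hsub hx))
    have hbd : ∀ x ∈ Metric.ball θs ε, ‖fderiv ℝ (l i) x‖ ≤ C₃ := by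
      intro x hx
      have hx' : ‖x - θs‖ ≤ ε := le_of_lt (by simpa [dist_eq_norm] using hx)
      have h := hgrad i (x - θs) hx'
      rw [show θs + (x - θs) = x by abel] at h
      rwa [gradient, LinearIsometryEquiv.norm_map] at h
    have hx1 : θs + δ ∈ Metric.ball θs ε := by
      simp only [Metric.mem_ball, dist_eq_norm, add_sub_cancel_left]
      exact lt_of_le_of_lt hδ hε'lt
    have hx2 : θs ∈ Metric.ball θs ε := Metric.mem_ball_self hε
    have h := (convex_ball θs ε).norm_image_sub_le_of_norm_fderiv_le hdiff hbd hx2 hx1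
    rw [add_sub_cancel_left] at h
    calc |l i (θs + δ) - l i θs| ≤ C₃ * ‖δ‖ := h
      _ ≤ C₃ * ε' := mul_le_mul_of_nonneg_left hδ hC₃
  -- per-term bound
  have hterm : ∀ i : Fin N,
      Real.log (μ - l i (θs + δ)) ≤ Real.log (μ - l i θs)
        + (l i θs - l i (θs + δ)) / (μ - C₂) + ν * C₃ * ε' / (μ - C₂) := by
    intro i
    set a := l i (θs + δ) with hav
    set b := l i θs with hbv
    have hma : 0 < μ - a := by have := (ha i).2; linarith
    have hmb : 0 < μ - b := by have := (hb i).2; linarith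
    have habs := abs_le.mp (hlip i)
    have step1 : Real.log (μ - a) - Real.log (μ - b) ≤ (b - a) / (μ - b) := by
      have h := Real.log_le_sub_one_of_pos (div_pos hma hmb)
      rw [Real.log_div hma.ne' hmb.ne'] at h
      have heq : (μ - a) / (μ - b) - 1 = (b - a) / (μ - b) := by field_simp; ring
      rw [heq] at h
      linarith
    have step2 : (b - a) / (μ - b) ≤ (b - a) / (μ - C₂) + ν * C₃ * ε' / (μ - C₂) := by
      rw [← add_div, div_le_div_iff₀ hmb hD]
      have h1 : 0 ≤ C₂ - b := sub_nonneg.mpr (hb i).2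
      have h2 : C₂ - b ≤ C₂ - C₁ := by have := (hb i).1; linarith
      have h3 : 0 ≤ C₃ * ε' := mul_nonneg hC₃ hε'pos.le
      nlinarith [mul_nonneg h3 h1, mul_le_mul_of_nonneg_right hνD.le h3,
        mul_le_mul_of_nonneg_left h2 h3]
    linarith
  -- sum up
  have hsum2 : ∑ i : Fin N, Real.log (μ - l i (θs + δ))
      ≤ (∑ i : Fin N, Real.log (μ - l i θs))
        + (∑ i : Fin N, (l i θs - l i (θs + δ))) / (μ - C₂)
        + N * (ν * C₃ * ε' / (μ - C₂)) := by
    calc ∑ i : Fin N, Real.log (μ - l i (θs + δ))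
        ≤ ∑ i : Fin N, (Real.log (μ - l i θs)
            + (l i θs - l i (θs + δ)) / (μ - C₂) + ν * C₃ * ε' / (μ - C₂)) :=
          Finset.sum_le_sum fun i _ => hterm i
      _ = (∑ i : Fin N, Real.log (μ - l i θs))
            + (∑ i : Fin N, (l i θs - l i (θs + δ))) / (μ - C₂)
            + N * (ν * C₃ * ε' / (μ - C₂)) := by
          rw [Finset.sum_add_distrib, Finset.sum_add_distrib, ← Finset.sum_div,
            Finset.sum_const, Finset.card_univ, Fintype.card_fin, nsmul_eq_mul]
  have hneg : (∑ i : Fin N, (l i θs - l i (θs + δ))) / (μ - C₂) ≤ 0 := by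
    apply div_nonpos_of_nonpos_of_nonneg _ hD.le
    rw [Finset.sum_sub_distrib]
    linarith
  have : (N:ℝ) * (ν * C₃ * ε' / (μ - C₂)) = ν * C₃ * ε' * N / (μ - C₂) := by ring
  linarith [hsum2, hneg, this ▸ hsum2]
end

section
/- (Lemma 7: approximate first-order optimality of mean loss at hypervolume maxima.) Let l_1,...,l_N be continuously differentiable on open Θ ⊆ ℝⁿ and θ* a local maximum of H(μ,θ) = ∑_i log(μ − l_i(θ)). Then there exists ε > 0 such that for all ξ ∈ (0, ε] and all Δ with ‖Δ‖ ≤ ξ: θ* + Δ ∈ Θ and ∑_{i=1}^N ∇l_i(θ*+Δ) · Δ ≥ −ν C_3 ξ N, where C_1 ≤ l_i(θ*+Δ) ≤ C_2, ‖∇l_i(θ*+Δ)‖ ≤ C_3 on the relevant ball and ν = max{(μ−C_1)/(μ−C_2) − 1, 1 − (μ−C_2)/(μ−C_1)}. -/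
open RealInnerProductSpace

lemma inner_gradient_eq_fderiv {E : Type*} [NormedAddCommGroup E] [InnerProductSpace ℝ E]
    [CompleteSpace E] (f : E → ℝ) (x y : E) : ⟪gradient f x, y⟫ = fderiv ℝ f x y := by
  rw [gradient, InnerProductSpace.toDual_symm_apply]

set_option maxHeartbeats 1000000 in
theorem hypervolume_max_approx_first_order_optimality_of_mean
    (n N : ℕ)
    (Θ : Set (EuclideanSpace ℝ (Fin n))) (hΘ : IsOpen Θ)
    (l : Fin N → EuclideanSpace ℝ (Fin n) → ℝ)
    (hl : ∀ i, ContDiffOn ℝ 1 (l i) Θ)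
    (μ : ℝ)
    (θs : EuclideanSpace ℝ (Fin n)) (hθs : θs ∈ Θ)
    (hfeas : ∀ i, l i θs < μ)
    (hmax : IsLocalMax (fun θ => ∑ i : Fin N, Real.log (μ - l i θ)) θs)
    (ε₀ : ℝ) (hε₀ : 0 < ε₀)
    (hball : ∀ Δ : EuclideanSpace ℝ (Fin n), ‖Δ‖ ≤ ε₀ → θs + Δ ∈ Θ)
    (C₁ C₂ C₃ : ℝ) (hμ : C₂ < μ)
    (hbound : ∀ i, ∀ Δ : EuclideanSpace ℝ (Fin n), ‖Δ‖ ≤ ε₀ →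
      C₁ ≤ l i (θs + Δ) ∧ l i (θs + Δ) ≤ C₂)
    (hgrad : ∀ i, ∀ Δ : EuclideanSpace ℝ (Fin n), ‖Δ‖ ≤ ε₀ →
      ‖gradient (l i) (θs + Δ)‖ ≤ C₃) :
    ∃ ε ∈ Set.Ioc (0 : ℝ) ε₀, ∀ ξ ∈ Set.Ioc (0 : ℝ) ε,
      ∀ Δ : EuclideanSpace ℝ (Fin n), ‖Δ‖ ≤ ξ →
        θs + Δ ∈ Θ ∧
        ∑ i : Fin N, ⟪gradient (l i) (θs + Δ), Δ⟫ ≥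
          -(max ((μ - C₁) / (μ - C₂) - 1) (1 - (μ - C₂) / (μ - C₁)))
            * C₃ * ξ * N := by
  rcases Nat.eq_zero_or_pos N with hN | hN
  · subst hN
    exact ⟨ε₀, ⟨hε₀, le_rfl⟩, fun ξ hξ Δ hΔ => ⟨hball Δ (hΔ.trans hξ.2), by simp⟩⟩
  have hz : ‖(0 : EuclideanSpace ℝ (Fin n))‖ ≤ ε₀ := by simp [hε₀.le]
  obtain ⟨i0⟩ : Nonempty (Fin N) := ⟨⟨0, hN⟩⟩
  have hC12 : C₁ ≤ C₂ := (hbound i0 0 hz).1.trans (hbound i0 0 hz).2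
  have hC3 : 0 ≤ C₃ := le_trans (norm_nonneg _) (hgrad i0 0 hz)
  have hp : (0:ℝ) < μ - C₂ := by linarith
  have hq : (0:ℝ) < μ - C₁ := by linarith
  by_cases hcc : C₁ = C₂
  · -- degenerate case: all l i are constant on the ball, ν = 0
    refine ⟨ε₀ / 2, ⟨by positivity, by linarith⟩, fun ξ hξ Δ hΔ => ?_⟩
    have hΔ2 : ‖Δ‖ ≤ ε₀ / 2 := hΔ.trans hξ.2
    have hΔε : ‖Δ‖ ≤ ε₀ := by linarith
    refine ⟨hball Δ hΔε, ?_⟩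
    have hg0 : ∀ i, gradient (l i) (θs + Δ) = 0 := by
      intro i
      have hev : l i =ᶠ[nhds (θs + Δ)] fun _ => C₁ := by
        filter_upwards [Metric.ball_mem_nhds (θs + Δ) (by positivity : (0:ℝ) < ε₀ / 2)] with y hy
        have h1 : ‖y - θs‖ ≤ ε₀ := by
          have he : y - θs = (y - (θs + Δ)) + Δ := by abel
          have h2 : ‖y - (θs + Δ)‖ < ε₀ / 2 := by
            simpa [dist_eq_norm] using hy
          calc ‖y - θs‖ = ‖(y - (θs + Δ)) + Δ‖ := by rw [he]
            _ ≤ ‖y - (θs + Δ)‖ + ‖Δ‖ := norm_add_le _ _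
            _ ≤ ε₀ := by linarith
        have hb := hbound i (y - θs) h1
        rw [show θs + (y - θs) = y by abel] at hb
        exact le_antisymm (hcc ▸ hb.2) hb.1
      rw [hev.gradient_eq, gradient_fun_const]
    have hd : (μ - C₂) / (μ - C₂) = 1 := div_self (ne_of_gt hp)
    subst hcc
    simp [hg0, hd]
  -- main case
  have hlt : C₁ < C₂ := lt_of_le_of_ne hC12 hcc
  by_cases hc3 : C₃ = 0
  · subst hc3
    refine ⟨ε₀, ⟨hε₀, le_rfl⟩, fun ξ hξ Δ hΔ => ?_⟩
    have hΔε : ‖Δ‖ ≤ ε₀ := hΔ.trans hξ.2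
    refine ⟨hball Δ hΔε, ?_⟩
    have hg0 : ∀ i, gradient (l i) (θs + Δ) = 0 := fun i =>
      norm_eq_zero.1 (le_antisymm (hgrad i Δ hΔε) (norm_nonneg _))
    simp [hg0]
  have hC3pos : 0 < C₃ := lt_of_le_of_ne hC3 (Ne.symm hc3)
  obtain ⟨ν₁, hν₁⟩ : ∃ x : ℝ, x = 1 - (μ - C₂) / (μ - C₁) := ⟨_, rfl⟩
  obtain ⟨ν₂, hν₂⟩ : ∃ x : ℝ, x = (μ - C₁) / (μ - C₂) - 1 := ⟨_, rfl⟩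
  have hν21 : ν₁ < ν₂ := by
    have h1 : ν₂ - ν₁ = (C₂ - C₁) ^ 2 / ((μ - C₂) * (μ - C₁)) := by
      rw [hν₂, hν₁]; field_simp; ring
    have h2 : (0:ℝ) < (C₂ - C₁) ^ 2 / ((μ - C₂) * (μ - C₁)) :=
      div_pos (pow_pos (sub_pos.2 hlt) 2) (mul_pos hp hq)
    linarith
  have hν₁pos : 0 < ν₁ := by
    rw [hν₁]
    have : (μ - C₂) / (μ - C₁) < 1 := (div_lt_one hq).2 (by linarith)
    linarith
  -- differentiability and vanishing of the hypervolume gradient at θs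
  have hdiff : ∀ i, DifferentiableAt ℝ (l i) θs := fun i =>
    ((hl i).differentiableOn one_ne_zero).differentiableAt (hΘ.mem_nhds hθs)
  have hane : ∀ i, (μ - l i θs) ≠ 0 := fun i => ne_of_gt (sub_pos.2 (hfeas i))
  have hfd : ∀ i, HasFDerivAt (fun θ => Real.log (μ - l i θ))
      ((μ - l i θs)⁻¹ • ((0 : EuclideanSpace ℝ (Fin n) →L[ℝ] ℝ) - fderiv ℝ (l i) θs)) θs :=
    fun i => ((hasFDerivAt_const μ θs).sub (hdiff i).hasFDerivAt).log (hane i)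
  have hsum : HasFDerivAt (fun θ => ∑ i : Fin N, Real.log (μ - l i θ))
      (∑ i : Fin N, (μ - l i θs)⁻¹ • ((0 : EuclideanSpace ℝ (Fin n) →L[ℝ] ℝ) - fderiv ℝ (l i) θs)) θs :=
    HasFDerivAt.fun_sum (fun i _ => hfd i)
  have hzero := hmax.hasFDerivAt_eq_zero hsum
  have hzeroΔ : ∀ Δ : EuclideanSpace ℝ (Fin n),
      ∑ i : Fin N, (μ - l i θs)⁻¹ * (fderiv ℝ (l i) θs Δ) = 0 := by
    intro Δ
    have h := ContinuousLinearMap.ext_iff.1 hzero Δ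
    simp only [ContinuousLinearMap.sum_apply, ContinuousLinearMap.smul_apply,
      ContinuousLinearMap.sub_apply, ContinuousLinearMap.zero_apply, zero_sub, smul_eq_mul,
      ContinuousLinearMap.neg_apply, mul_neg, Finset.sum_neg_distrib, neg_eq_zero,
      ContinuousLinearMap.zero_apply] at h
    exact h
  -- values at θs
  have hb0 : ∀ i, C₁ ≤ l i θs ∧ l i θs ≤ C₂ := by
    intro i; have := hbound i 0 hz; rwa [add_zero] at this
  have hg0 : ∀ i, ‖gradient (l i) θs‖ ≤ C₃ := by
    intro i; have := hgrad i 0 hz; rwa [add_zero] at this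
  -- continuity of gradients
  obtain ⟨δ, hδ⟩ : ∃ x : ℝ, x = (ν₂ - ν₁) * C₃ := ⟨_, rfl⟩
  have hδpos : 0 < δ := by
    rw [hδ]; exact mul_pos (by linarith) hC3pos
  have hev : ∀ᶠ y in nhds θs, ∀ i, ‖gradient (l i) y - gradient (l i) θs‖ ≤ δ := by
    rw [Filter.eventually_all]
    intro i
    have h2 : ContinuousAt (fderiv ℝ (l i)) θs :=
      ((hl i).continuousOn_fderiv_of_isOpen hΘ le_rfl).continuousAt (hΘ.mem_nhds hθs)
    filter_upwards [h2 (Metric.ball_mem_nhds (fderiv ℝ (l i) θs) hδpos)] with y hy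
    have hy' : ‖fderiv ℝ (l i) y - fderiv ℝ (l i) θs‖ < δ := by
      have h3 : dist (fderiv ℝ (l i) y) (fderiv ℝ (l i) θs) < δ := Metric.mem_ball.1 hy
      rwa [dist_eq_norm] at h3
    have heq : ‖gradient (l i) y - gradient (l i) θs‖
        = ‖fderiv ℝ (l i) y - fderiv ℝ (l i) θs‖ := by
      rw [gradient, gradient, ← map_sub]
      exact LinearIsometryEquiv.norm_map _ _
    rw [heq]
    exact hy'.le
  obtain ⟨r, hr, hrP⟩ := Metric.eventually_nhds_iff.1 hev
  refine ⟨min ε₀ (r / 2), ⟨lt_min hε₀ (by positivity), min_le_left _ _⟩, fun ξ hξ Δ hΔ => ?_⟩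
  have hξpos : 0 < ξ := hξ.1
  have hΔξ : ‖Δ‖ ≤ ξ := hΔ
  have hΔε : ‖Δ‖ ≤ ε₀ := hΔ.trans (hξ.2.trans (min_le_left _ _))
  have hξε₀ : ξ ≤ ε₀ := hξ.2.trans (min_le_left _ _)
  have hΔr : dist (θs + Δ) θs < r := by
    rw [dist_eq_norm, add_sub_cancel_left]
    calc ‖Δ‖ ≤ r / 2 := hΔ.trans (hξ.2.trans (min_le_right _ _))
      _ < r := by linarith
  refine ⟨hball Δ hΔε, ?_⟩
  -- the first-order term at θs
  have key : ∑ i : Fin N, fderiv ℝ (l i) θs Δ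
      = ∑ i : Fin N, ((μ - l i θs) - (μ - C₂)) * ((μ - l i θs)⁻¹ * fderiv ℝ (l i) θs Δ) := by
    have hterm : ∀ i : Fin N, fderiv ℝ (l i) θs Δ
        - ((μ - l i θs) - (μ - C₂)) * ((μ - l i θs)⁻¹ * fderiv ℝ (l i) θs Δ)
        = (μ - C₂) * ((μ - l i θs)⁻¹ * fderiv ℝ (l i) θs Δ) := by
      intro i
      have hmc : (μ - l i θs) * ((μ - l i θs)⁻¹ * fderiv ℝ (l i) θs Δ)
          = fderiv ℝ (l i) θs Δ := by
        rw [← mul_assoc, mul_inv_cancel₀ (hane i), one_mul]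
      linear_combination -hmc
    have hs : (∑ i : Fin N, fderiv ℝ (l i) θs Δ)
        - ∑ i : Fin N, ((μ - l i θs) - (μ - C₂)) * ((μ - l i θs)⁻¹ * fderiv ℝ (l i) θs Δ)
        = (μ - C₂) * ∑ i : Fin N, (μ - l i θs)⁻¹ * fderiv ℝ (l i) θs Δ := by
      rw [← Finset.sum_sub_distrib, Finset.mul_sum]
      exact Finset.sum_congr rfl fun i _ => hterm i
    rw [hzeroΔ Δ, mul_zero] at hs
    linarith
  have hterm_bound : ∀ i : Fin N,
      ((μ - l i θs) - (μ - C₂)) * ((μ - l i θs)⁻¹ * fderiv ℝ (l i) θs Δ)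
        ≥ -(ν₁ * (C₃ * ξ)) := by
    intro i
    set a : ℝ := μ - l i θs with ha
    have ha1 : μ - C₂ ≤ a := by have := (hb0 i).2; rw [ha]; linarith
    have ha2 : a ≤ μ - C₁ := by have := (hb0 i).1; rw [ha]; linarith
    have hapos : 0 < a := lt_of_lt_of_le hp ha1
    have hcoef : (a - (μ - C₂)) * a⁻¹ ≤ ν₁ := by
      rw [sub_mul, mul_inv_cancel₀ (ne_of_gt hapos), hν₁]
      have h1 : (μ - C₂) / (μ - C₁) ≤ (μ - C₂) * a⁻¹ := by
        rw [div_eq_mul_inv]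
        exact mul_le_mul_of_nonneg_left (inv_anti₀ hapos ha2) hp.le
      linarith
    have hcoef0 : 0 ≤ (a - (μ - C₂)) * a⁻¹ :=
      mul_nonneg (by linarith) (inv_nonneg.2 hapos.le)
    have hF : |fderiv ℝ (l i) θs Δ| ≤ C₃ * ξ := by
      rw [← inner_gradient_eq_fderiv]
      calc |⟪gradient (l i) θs, Δ⟫| ≤ ‖gradient (l i) θs‖ * ‖Δ‖ := abs_real_inner_le_norm _ _
        _ ≤ C₃ * ξ := mul_le_mul (hg0 i) hΔξ (norm_nonneg _) hC3
    have hFl : -(C₃ * ξ) ≤ fderiv ℝ (l i) θs Δ := neg_le_of_abs_le hF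
    have hCξ : 0 ≤ C₃ * ξ := by positivity
    calc (a - (μ - C₂)) * (a⁻¹ * fderiv ℝ (l i) θs Δ)
        = ((a - (μ - C₂)) * a⁻¹) * fderiv ℝ (l i) θs Δ := by ring
      _ ≥ ((a - (μ - C₂)) * a⁻¹) * (-(C₃ * ξ)) := mul_le_mul_of_nonneg_left hFl hcoef0
      _ = -(((a - (μ - C₂)) * a⁻¹) * (C₃ * ξ)) := by ring
      _ ≥ -(ν₁ * (C₃ * ξ)) := by
          have := mul_le_mul_of_nonneg_right hcoef hCξ
          linarith
  have hS1 : ∑ i : Fin N, ⟪gradient (l i) θs, Δ⟫ ≥ -(ν₁ * (C₃ * ξ)) * N := by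
    have h1 : ∑ i : Fin N, ⟪gradient (l i) θs, Δ⟫ = ∑ i : Fin N, fderiv ℝ (l i) θs Δ :=
      Finset.sum_congr rfl fun i _ => inner_gradient_eq_fderiv _ _ _
    rw [h1, key]
    calc ∑ i : Fin N, ((μ - l i θs) - (μ - C₂)) * ((μ - l i θs)⁻¹ * fderiv ℝ (l i) θs Δ)
        ≥ ∑ _i : Fin N, -(ν₁ * (C₃ * ξ)) := Finset.sum_le_sum fun i _ => hterm_bound i
      _ = -(ν₁ * (C₃ * ξ)) * N := by
          rw [Finset.sum_const, Finset.card_univ, Fintype.card_fin, nsmul_eq_mul]; ring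
  have hS2 : ∑ i : Fin N, ⟪gradient (l i) (θs + Δ) - gradient (l i) θs, Δ⟫ ≥ -(δ * ξ) * N := by
    have hterm : ∀ i : Fin N, ⟪gradient (l i) (θs + Δ) - gradient (l i) θs, Δ⟫ ≥ -(δ * ξ) := by
      intro i
      have h1 : ‖gradient (l i) (θs + Δ) - gradient (l i) θs‖ ≤ δ := hrP hΔr i
      calc ⟪gradient (l i) (θs + Δ) - gradient (l i) θs, Δ⟫
          ≥ -(‖gradient (l i) (θs + Δ) - gradient (l i) θs‖ * ‖Δ‖) :=
            neg_le_of_abs_le (abs_real_inner_le_norm _ _)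
        _ ≥ -(δ * ξ) := by
            have := mul_le_mul h1 hΔξ (norm_nonneg _) hδpos.le
            linarith
    calc ∑ i : Fin N, ⟪gradient (l i) (θs + Δ) - gradient (l i) θs, Δ⟫
        ≥ ∑ _i : Fin N, -(δ * ξ) := Finset.sum_le_sum fun i _ => hterm i
      _ = -(δ * ξ) * N := by
          rw [Finset.sum_const, Finset.card_univ, Fintype.card_fin, nsmul_eq_mul]; ring
  have hsplit : ∑ i : Fin N, ⟪gradient (l i) (θs + Δ), Δ⟫
      = ∑ i : Fin N, ⟪gradient (l i) θs, Δ⟫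
        + ∑ i : Fin N, ⟪gradient (l i) (θs + Δ) - gradient (l i) θs, Δ⟫ := by
    rw [← Finset.sum_add_distrib]
    refine Finset.sum_congr rfl fun i _ => ?_
    rw [inner_sub_left]; ring
  have hmaxeq : max ((μ - C₁) / (μ - C₂) - 1) (1 - (μ - C₂) / (μ - C₁)) = ν₂ := by
    rw [← hν₁, ← hν₂]
    exact max_eq_left hν21.le
  rw [hsplit, hmaxeq]
  have hRHS : -ν₂ * C₃ * ξ * (N:ℝ) = -(ν₁ * (C₃ * ξ)) * N + -(δ * ξ) * N := by
    rw [hδ]; ring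
  linarith
end
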